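/- (Correctness of extend-then-truncate over a larger ring.) Let s ≤ L be natural numbers, let x₀, x₁ ∈ {0, …, 2^L − 1}, and let m be a natural number with x₀ + x₁ = m + 2^L over the integers. Let c = 1 if (x₀ mod 2^s) + (x₁ mod 2^s) ≥ 2^s and c = 0 otherwise. Then ⌊x₀/2^s⌋ + ⌊x₁/2^s⌋ = ⌊m/2^s⌋ + 2^{L−s} − c; consequently ⌊x₀/2^s⌋ + ⌊x₁/2^s⌋ ≡ ⌊m/2^s⌋ − c (mod 2^{L−s}), so after each party locally right-shifts its share by s bits, the shares reconstruct ⌊m/2^s⌋ modulo 2^{L−s} up to a one-bit rounding error c ∈ {0,1}. -/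

import Mathlib

/-- Correctness of extend-then-truncate over a larger ring:
for `s ≤ L`, shares `x₀, x₁ < 2^L` with `x₀ + x₁ = m + 2^L` over the integers, and the
carry `c = 1` iff `(x₀ mod 2^s) + (x₁ mod 2^s) ≥ 2^s` (else `0`), we have
`⌊x₀/2^s⌋ + ⌊x₁/2^s⌋ = ⌊m/2^s⌋ + 2^{L−s} − c`, hence
`⌊x₀/2^s⌋ + ⌊x₁/2^s⌋ ≡ ⌊m/2^s⌋ − c (mod 2^{L−s})`: the locally right-shifted shares
reconstruct `⌊m/2^s⌋` modulo `2^{L−s}` up to a one-bit rounding error `c ∈ {0,1}`. -/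
theorem stmt_12 (s L : ℕ) (hsL : s ≤ L) (x₀ x₁ m : ℕ)
    (hx₀ : x₀ < 2 ^ L) (hx₁ : x₁ < 2 ^ L)
    (hwrap : x₀ + x₁ = m + 2 ^ L)
    (c : ℕ) (hc : c = if 2 ^ s ≤ x₀ % 2 ^ s + x₁ % 2 ^ s then 1 else 0) :
    x₀ / 2 ^ s + x₁ / 2 ^ s = m / 2 ^ s + 2 ^ (L - s) - c ∧
    ((x₀ / 2 ^ s + x₁ / 2 ^ s : ℤ) ≡ (m / 2 ^ s : ℕ) - (c : ℤ) [ZMOD (2 ^ (L - s))]) := by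
  have hT : 0 < 2 ^ s := Nat.pow_pos (by norm_num)
  have hP : 2 ^ L = 2 ^ (L - s) * 2 ^ s := by
    rw [← pow_add]; congr 1; omega
  have hdiv : (x₀ + x₁) / 2 ^ s = x₀ / 2 ^ s + x₁ / 2 ^ s + c := by
    rw [Nat.add_div hT, hc]
  have hdiv2 : (x₀ + x₁) / 2 ^ s = m / 2 ^ s + 2 ^ (L - s) := by
    rw [hwrap, hP, Nat.add_mul_div_right _ _ hT]
  have key : x₀ / 2 ^ s + x₁ / 2 ^ s + c = m / 2 ^ s + 2 ^ (L - s) := by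
    rw [← hdiv, hdiv2]
  have hc01 : c ≤ 1 := by rw [hc]; split <;> norm_num
  refine ⟨Nat.eq_sub_of_add_eq key, ?_⟩
  have keyz : ((x₀ / 2 ^ s : ℕ) : ℤ) + ((x₁ / 2 ^ s : ℕ) : ℤ) + (c : ℤ)
      = ((m / 2 ^ s : ℕ) : ℤ) + 2 ^ (L - s) := by exact_mod_cast key
  refine Int.modEq_iff_dvd.mpr ⟨-1, ?_⟩
  push_cast
  linarith
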